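/- Let f ∈ R = k⟦x₁,…,xₙ⟧ be nonzero with mult(f) ≥ 3, let a ≥ 0 be an integer, let g₁,…,gₙ ∈ m^a·J_f, and set g = Σ_{i=1}^n gᵢ·∂f/∂xᵢ. Then the k-algebra endomorphism φ of R determined by φ(xᵢ) = xᵢ + gᵢ for all i is a k-algebra automorphism of R, and it satisfies φ(f) − (f+g) ∈ m^{2a+1}·J_f². -/

import Mathlib

noncomputable section

open MvPowerSeries

/-- Partial derivative `∂f/∂xᵢ` of a multivariate formal power series, defined coefficientwise. -/
def pderiv {k : Type*} [CommRing k] {n : ℕ} (i : Fin n) (f : MvPowerSeries (Fin n) k) :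
    MvPowerSeries (Fin n) k :=
  fun β => (β i + 1 : ℕ) • MvPowerSeries.coeff (β + Finsupp.single i 1) f

/-- The Jacobian ideal `J_f = (∂f/∂x₁, …, ∂f/∂xₙ)` of `f`. -/
def jacobianIdeal {k : Type*} [CommRing k] {n : ℕ} (f : MvPowerSeries (Fin n) k) :
    Ideal (MvPowerSeries (Fin n) k) :=
  Ideal.span (Set.range fun i => pderiv i f)

/-- The maximal ideal of `k⟦x₁,…,xₙ⟧`: series with zero constant term. -/
def mIdeal (k : Type*) [CommRing k] (n : ℕ) : Ideal (MvPowerSeries (Fin n) k) :=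
  RingHom.ker (MvPowerSeries.constantCoeff : MvPowerSeries (Fin n) k →+* k)

namespace Stmt2Aux
open Finsupp


variable {k : Type*} [Field k] {n : ℕ}

/-- total degree of an exponent -/
def deg {n : ℕ} (β : Fin n →₀ ℕ) : ℕ := ∑ i, β i

lemma deg_add (β γ : Fin n →₀ ℕ) : deg (β + γ) = deg β + deg γ := by
  simp [deg, Finset.sum_add_distrib]

lemma le_deg (β : Fin n →₀ ℕ) (i : Fin n) : β i ≤ deg β :=
  Finset.single_le_sum (fun _ _ => Nat.zero_le _) (Finset.mem_univ i)

lemma deg_eq_zero {β : Fin n →₀ ℕ} (h : deg β = 0) : β = 0 := by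
  ext i
  exact Nat.le_antisymm ((le_deg β i).trans h.le) (Nat.zero_le _)

lemma deg_mono {β γ : Fin n →₀ ℕ} (h : β ≤ γ) : deg β ≤ deg γ :=
  Finset.sum_le_sum fun i _ => h i

lemma deg_single (i : Fin n) (e : ℕ) : deg (Finsupp.single i e) = e := by
  simp [deg, Finset.sum_eq_single i, Finsupp.single_apply]

/-- the ideal of power series whose coefficients vanish below total degree q -/
def Mq (k : Type*) [Field k] (n q : ℕ) : Ideal (MvPowerSeries (Fin n) k) where
  carrier := {f | ∀ β, deg β < q → MvPowerSeries.coeff (R := k) β f = 0}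
  zero_mem' := fun β _ => by simp
  add_mem' := by
    intro u v hu hv β hβ
    simp [map_add, hu β hβ, hv β hβ]
  smul_mem' := by
    intro c u hu β hβ
    rw [smul_eq_mul, MvPowerSeries.coeff_mul]
    refine Finset.sum_eq_zero fun p hp => ?_
    rw [Finset.HasAntidiagonal.mem_antidiagonal] at hp
    have h2 : deg p.2 < q := lt_of_le_of_lt (deg_mono (by simp [← hp])) hβ
    simp [hu p.2 h2]

lemma mem_Mq {q : ℕ} {f : MvPowerSeries (Fin n) k} :
    f ∈ Mq k n q ↔ ∀ β, deg β < q → MvPowerSeries.coeff (R := k) β f = 0 := Iff.rfl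

lemma Mq_mono {q q' : ℕ} (h : q' ≤ q) : Mq k n q ≤ Mq k n q' :=
  fun _ hf β hβ => hf β (lt_of_lt_of_le hβ h)

lemma Mq_zero : Mq k n 0 = ⊤ := by
  ext f; simp [mem_Mq]

lemma mul_mem_Mq {p q : ℕ} {u v : MvPowerSeries (Fin n) k}
    (hu : u ∈ Mq k n p) (hv : v ∈ Mq k n q) : u * v ∈ Mq k n (p + q) := by
  intro β hβ
  rw [MvPowerSeries.coeff_mul]
  refine Finset.sum_eq_zero fun pr hpr => ?_
  rw [Finset.HasAntidiagonal.mem_antidiagonal] at hpr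
  have hd : deg pr.1 + deg pr.2 < p + q := by
    rw [← deg_add, hpr]; exact hβ
  rcases lt_or_ge (deg pr.1) p with h1 | h1
  · simp [hu pr.1 h1]
  · have h2 : deg pr.2 < q := by omega
    simp [hv pr.2 h2]

lemma monomial_mem_Mq (β : Fin n →₀ ℕ) (c : k) :
    MvPowerSeries.monomial (R := k) β c ∈ Mq k n (deg β) := by
  intro γ hγ
  rw [MvPowerSeries.coeff_monomial]
  split
  · next h => exact absurd (h ▸ hγ) (lt_irrefl _)
  · rfl

lemma X_mem_Mq (i : Fin n) : (MvPowerSeries.X i : MvPowerSeries (Fin n) k) ∈ Mq k n 1 := by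
  have := monomial_mem_Mq (k := k) (Finsupp.single i 1) 1
  rwa [deg_single] at this


lemma mIdeal_eq_Mq_one : mIdeal k n = Mq k n 1 := by
  ext f
  rw [mem_Mq, mIdeal, RingHom.mem_ker]
  constructor
  · intro h β hβ
    have : β = 0 := deg_eq_zero (by omega)
    rw [this, MvPowerSeries.coeff_zero_eq_constantCoeff]
    exact h
  · intro h
    rw [← MvPowerSeries.coeff_zero_eq_constantCoeff_apply]
    exact h 0 (by simp [deg])

lemma X_mem_mIdeal (i : Fin n) : (MvPowerSeries.X i : MvPowerSeries (Fin n) k) ∈ mIdeal k n := by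
  rw [mIdeal_eq_Mq_one]; exact X_mem_Mq i

lemma coeff_X_mul' (i : Fin n) (f : MvPowerSeries (Fin n) k) (γ : Fin n →₀ ℕ) :
    MvPowerSeries.coeff (R := k) γ (MvPowerSeries.X i * f) =
      if Finsupp.single i 1 ≤ γ then MvPowerSeries.coeff (R := k) (γ - Finsupp.single i 1) f else 0 := by
  rw [MvPowerSeries.X, MvPowerSeries.coeff_monomial_mul]
  simp

/-- component used to decompose an element of `Mq (q+1)` as `∑ i, X i * fᵢ` -/
def fComp (i : Fin n) (f : MvPowerSeries (Fin n) k) : MvPowerSeries (Fin n) k :=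
  fun γ => if ∀ j, j < i → γ j = 0 then MvPowerSeries.coeff (R := k) (γ + Finsupp.single i 1) f else 0

lemma coeff_fComp (i : Fin n) (f : MvPowerSeries (Fin n) k) (γ : Fin n →₀ ℕ) :
    MvPowerSeries.coeff (R := k) γ (fComp i f) =
      if ∀ j, j < i → γ j = 0 then MvPowerSeries.coeff (R := k) (γ + Finsupp.single i 1) f else 0 :=
  rfl

lemma fComp_mem (i : Fin n) {q : ℕ} {f : MvPowerSeries (Fin n) k} (hf : f ∈ Mq k n (q + 1)) :
    fComp i f ∈ Mq k n q := by
  intro γ hγ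
  rw [coeff_fComp]
  split
  · apply hf
    rw [deg_add, deg_single]
    omega
  · rfl

lemma sum_X_mul_fComp {f : MvPowerSeries (Fin n) k} (hf : f ∈ Mq k n 1) :
    ∑ i, MvPowerSeries.X i * fComp i f = f := by
  apply MvPowerSeries.ext
  intro γ
  rw [map_sum]
  rcases eq_or_ne γ 0 with rfl | hγ
  · rw [Finset.sum_eq_zero, hf 0 (by simp [deg])]
    intro i _
    rw [coeff_X_mul', if_neg]
    intro hle
    have := hle i
    simp at this
  · have hsupp : γ.support.Nonempty := by
      rw [Finsupp.support_nonempty_iff]; exact hγ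
    set i₀ := γ.support.min' hsupp with hi₀
    have hmem : γ i₀ ≠ 0 := Finsupp.mem_support_iff.mp (γ.support.min'_mem hsupp)
    have hmin : ∀ j, j < i₀ → γ j = 0 := by
      intro j hj
      by_contra hj0
      exact absurd (γ.support.min'_le j (Finsupp.mem_support_iff.mpr hj0)) (not_le.mpr hj)
    rw [Finset.sum_eq_single i₀]
    · rw [coeff_X_mul', if_pos (Finsupp.single_le_iff.mpr (Nat.one_le_iff_ne_zero.mpr hmem)),
        coeff_fComp, if_pos, tsub_add_cancel_of_le
          (Finsupp.single_le_iff.mpr (Nat.one_le_iff_ne_zero.mpr hmem))]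
      intro j hj
      rw [Finsupp.tsub_apply, hmin j hj]
      simp
    · intro i _ hne
      rw [coeff_X_mul']
      split
      · next hle =>
        rw [coeff_fComp, if_neg]
        intro hall
        apply hne
        have hi : γ i ≠ 0 := by
          have := Finsupp.single_le_iff.mp hle
          omega
        have h1 : i₀ ≤ i := γ.support.min'_le i (Finsupp.mem_support_iff.mpr hi)
        rcases eq_or_lt_of_le h1 with h | h
        · exact h.symm
        · exfalso
          have := hall i₀ h
          rw [Finsupp.tsub_apply] at this
          have : γ i₀ = 0 := by
            have hs : Finsupp.single i 1 i₀ = 0 := by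
              rw [Finsupp.single_apply, if_neg (by exact fun hh => absurd hh (by omega))]
            omega
          exact hmem this
      · rfl
    · intro h
      exact absurd (Finset.mem_univ i₀) h

lemma Mq_succ_le (q : ℕ) : Mq k n (q + 1) ≤ mIdeal k n * Mq k n q := by
  intro f hf
  have h1 : f ∈ Mq k n 1 := Mq_mono (by omega) hf
  rw [← sum_X_mul_fComp h1]
  apply Ideal.sum_mem
  intro i _
  exact Ideal.mul_mem_mul (X_mem_mIdeal i) (fComp_mem i hf)

lemma pow_mIdeal_eq (q : ℕ) : mIdeal k n ^ q = Mq k n q := by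
  induction q with
  | zero => simp [Mq_zero]
  | succ q ih =>
    apply le_antisymm
    · rw [pow_succ]
      intro u hu
      refine Submodule.mul_induction_on hu (fun a ha b hb => ?_) (fun a b ha hb => ?_)
      · have ha' : a ∈ Mq k n q := by rw [← ih]; exact ha
        have hb' : b ∈ Mq k n 1 := by rw [← mIdeal_eq_Mq_one]; exact hb
        have := mul_mem_Mq ha' hb'
        exact this
      · exact add_mem ha hb
    · calc Mq k n (q + 1) ≤ mIdeal k n * Mq k n q := Mq_succ_le q
        _ = mIdeal k n * mIdeal k n ^ q := by rw [ih]
        _ = mIdeal k n ^ (q + 1) := by rw [← pow_succ']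

lemma eq_zero_of_forall_mem_Mq {f : MvPowerSeries (Fin n) k} (h : ∀ q, f ∈ Mq k n q) :
    f = 0 := by
  apply MvPowerSeries.ext
  intro γ
  rw [map_zero]
  exact h (deg γ + 1) γ (by omega)


variable {k : Type*} [Field k] {n : ℕ}

/-- pderiv as an additive hom -/
def pderivHom (i : Fin n) : MvPowerSeries (Fin n) k →+ MvPowerSeries (Fin n) k where
  toFun := pderiv i
  map_zero' := by
    apply MvPowerSeries.ext; intro γ
    show (γ i + 1 : ℕ) • MvPowerSeries.coeff (R := k) (γ + Finsupp.single i 1) 0 = _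
    simp
  map_add' := by
    intro u v
    apply MvPowerSeries.ext; intro γ
    show (γ i + 1 : ℕ) • MvPowerSeries.coeff (R := k) (γ + Finsupp.single i 1) (u + v) = _
    rw [map_add]
    rw [smul_add]
    rfl

lemma pderiv_eq_hom (i : Fin n) (f : MvPowerSeries (Fin n) k) :
    pderiv i f = pderivHom i f := rfl

lemma coeff_pderiv (i : Fin n) (f : MvPowerSeries (Fin n) k) (γ : Fin n →₀ ℕ) :
    MvPowerSeries.coeff (R := k) γ (pderiv i f) =
      (γ i + 1 : ℕ) • MvPowerSeries.coeff (R := k) (γ + Finsupp.single i 1) f := rfl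

lemma pderiv_sub (i : Fin n) (u v : MvPowerSeries (Fin n) k) :
    pderiv i (u - v) = pderiv i u - pderiv i v := by
  rw [pderiv_eq_hom, pderiv_eq_hom, pderiv_eq_hom, map_sub]

lemma pderiv_mem_Mq {q : ℕ} (i : Fin n) {f : MvPowerSeries (Fin n) k}
    (hf : f ∈ Mq k n (q + 1)) : pderiv i f ∈ Mq k n q := by
  intro γ hγ
  rw [coeff_pderiv, hf _ (by rw [deg_add, deg_single]; omega), smul_zero]

lemma pderiv_monomial (i : Fin n) (β : Fin n →₀ ℕ) (c : k) :
    pderiv i (MvPowerSeries.monomial (R := k) β c) =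
      (β i) • MvPowerSeries.monomial (R := k) (β - Finsupp.single i 1) c := by
  apply MvPowerSeries.ext; intro γ
  rw [coeff_pderiv, map_nsmul, MvPowerSeries.coeff_monomial, MvPowerSeries.coeff_monomial]
  rcases Nat.eq_zero_or_pos (β i) with h0 | hpos
  · rw [if_neg, smul_zero, h0, zero_smul]
    intro h
    have := congrArg (fun δ => δ i) h
    simp [h0] at this
  · have hle : Finsupp.single i 1 ≤ β := Finsupp.single_le_iff.mpr hpos
    by_cases h : γ + Finsupp.single i 1 = β
    · rw [if_pos h, if_pos (by rw [← h]; simp)]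
      have hγi : γ i + 1 = β i := by
        have := congrArg (fun δ => δ i) h
        simp at this
        omega
      rw [hγi]
    · rw [if_neg h, if_neg, smul_zero, smul_zero]
      intro hγ
      apply h
      rw [hγ, tsub_add_cancel_of_le hle]

/-- `∏ i, X i ^ β i = monomial β 1` -/
lemma prod_X_pow (β : Fin n →₀ ℕ) :
    (∏ i, (MvPowerSeries.X i : MvPowerSeries (Fin n) k) ^ β i) =
      MvPowerSeries.monomial (R := k) β 1 := by
  have key : ∀ s : Finset (Fin n),
      (∏ i ∈ s, (MvPowerSeries.X i : MvPowerSeries (Fin n) k) ^ β i) =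
        MvPowerSeries.monomial (R := k) (∑ i ∈ s, Finsupp.single i (β i)) 1 := by
    intro s
    induction s using Finset.induction with
    | empty => simp [← MvPowerSeries.coeff_zero_eq_constantCoeff]
    | insert a s' hx ih =>
      rw [Finset.prod_insert hx, Finset.sum_insert hx, ih, MvPowerSeries.X_pow_eq,
        MvPowerSeries.monomial_mul_monomial, one_mul]
  rw [key Finset.univ]
  have hβ : (∑ i, Finsupp.single i (β i)) = β := by
    ext j
    rw [Finsupp.finset_sum_apply]
    rw [Finset.sum_eq_single j (fun i _ hij => Finsupp.single_eq_of_ne' hij)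
      (fun h => absurd (Finset.mem_univ j) h)]
    simp
  rw [hβ]

lemma monomial_eq_C_mul (β : Fin n →₀ ℕ) (c : k) :
    MvPowerSeries.monomial (R := k) β c =
      (MvPowerSeries.C (σ := Fin n) (R := k)) c * MvPowerSeries.monomial (R := k) β 1 := by
  have : ((MvPowerSeries.C (σ := Fin n) (R := k)) c : MvPowerSeries (Fin n) k)
      = MvPowerSeries.monomial (R := k) 0 c := rfl
  rw [this, MvPowerSeries.monomial_mul_monomial, zero_add, mul_one]


variable {k : Type*} [Field k] {n : ℕ}

/-- substituted monomial: `∏ i, (X i + g i) ^ β i` -/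
def W (g : Fin n → MvPowerSeries (Fin n) k) (β : Fin n →₀ ℕ) : MvPowerSeries (Fin n) k :=
  ∏ i, (MvPowerSeries.X i + g i) ^ β i

lemma W_add (g : Fin n → MvPowerSeries (Fin n) k) (β γ : Fin n →₀ ℕ) :
    W g (β + γ) = W g β * W g γ := by
  rw [W, W, W, ← Finset.prod_mul_distrib]
  refine Finset.prod_congr rfl fun i _ => ?_
  rw [Finsupp.add_apply, pow_add]

lemma W_zero (g : Fin n → MvPowerSeries (Fin n) k) : W g 0 = 1 := by
  simp [W]

lemma W_single (g : Fin n → MvPowerSeries (Fin n) k) (i : Fin n) :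
    W g (Finsupp.single i 1) = MvPowerSeries.X i + g i := by
  rw [W, Finset.prod_eq_single i (fun j _ hj => by rw [Finsupp.single_eq_of_ne' (Ne.symm hj), pow_zero])
    (fun h => absurd (Finset.mem_univ i) h)]
  simp

lemma pow_mem_Mq {u : MvPowerSeries (Fin n) k} (hu : u ∈ Mq k n 1) (e : ℕ) :
    u ^ e ∈ Mq k n e := by
  induction e with
  | zero => rw [pow_zero]; rw [Mq_zero]; trivial
  | succ e ih => rw [pow_succ]; exact mul_mem_Mq ih hu

lemma W_mem (g : Fin n → MvPowerSeries (Fin n) k) (hg : ∀ i, g i ∈ Mq k n 1)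
    (β : Fin n →₀ ℕ) : W g β ∈ Mq k n (deg β) := by
  have key : ∀ s : Finset (Fin n),
      (∏ i ∈ s, (MvPowerSeries.X i + g i) ^ β i) ∈ Mq k n (∑ i ∈ s, β i) := by
    intro s
    induction s using Finset.induction with
    | empty => simp [Mq_zero]
    | insert a s' hx ih =>
      rw [Finset.prod_insert hx, Finset.sum_insert hx]
      exact mul_mem_Mq (pow_mem_Mq (add_mem (X_mem_Mq a) (hg a)) (β a)) ih
  exact key Finset.univ

/-- finite set of exponents of total degree `< d` -/
def Br (n d : ℕ) : Finset (Fin n →₀ ℕ) :=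
  (Finset.univ.image fun t : Fin n → Fin (d + 1) =>
    Finsupp.equivFunOnFinite.symm fun i => (t i : ℕ)).filter fun β => deg β < d

lemma mem_Br {d : ℕ} {β : Fin n →₀ ℕ} : β ∈ Br n d ↔ deg β < d := by
  constructor
  · intro h
    exact (Finset.mem_filter.mp h).2
  · intro h
    refine Finset.mem_filter.mpr ⟨Finset.mem_image.mpr ⟨fun i => ⟨β i, ?_⟩, Finset.mem_univ _, ?_⟩, h⟩
    · exact lt_of_le_of_lt (le_deg β i) (by omega)
    · have : (fun i => ((⟨β i, lt_of_le_of_lt (le_deg β i) (by omega : deg β < d + 1)⟩ : Fin (d+1)) : ℕ)) = ⇑β := rfl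
      rw [this]
      exact Finsupp.equivFunOnFinite_symm_coe β

lemma Br_mono {d d' : ℕ} (h : d ≤ d') : Br n d ⊆ Br n d' := by
  intro β hβ
  rw [mem_Br] at hβ ⊢
  omega

/-- truncation of `f`: the sum of its monomials of total degree `< r` -/
def Pt (r : ℕ) (f : MvPowerSeries (Fin n) k) : MvPowerSeries (Fin n) k :=
  ∑ β ∈ Br n r, MvPowerSeries.monomial (R := k) β (MvPowerSeries.coeff (R := k) β f)

lemma coeff_Pt (r : ℕ) (f : MvPowerSeries (Fin n) k) (γ : Fin n →₀ ℕ) :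
    MvPowerSeries.coeff (R := k) γ (Pt r f) =
      if deg γ < r then MvPowerSeries.coeff (R := k) γ f else 0 := by
  rw [Pt, map_sum]
  simp only [MvPowerSeries.coeff_monomial]
  rw [Finset.sum_ite_eq (Br n r) γ fun β => MvPowerSeries.coeff (R := k) β f]
  by_cases h : deg γ < r
  · rw [if_pos (mem_Br.mpr h), if_pos h]
  · rw [if_neg (fun hh => h (mem_Br.mp hh)), if_neg h]

lemma sub_Pt_mem (r : ℕ) (f : MvPowerSeries (Fin n) k) : f - Pt r f ∈ Mq k n r := by
  intro γ hγ
  rw [map_sub, coeff_Pt, if_pos hγ, sub_self]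

/-- partial substitution sum: `∑_{deg β < r} c_β ∏ (X i + g i)^{β i}` -/
def Phir (g : Fin n → MvPowerSeries (Fin n) k) (r : ℕ) (f : MvPowerSeries (Fin n) k) :
    MvPowerSeries (Fin n) k :=
  ∑ β ∈ Br n r, (MvPowerSeries.C (σ := Fin n) (R := k)) (MvPowerSeries.coeff (R := k) β f) * W g β

/-- stability: coefficients of `Phir` below total degree stabilize -/
lemma coeff_Phir_stable (g : Fin n → MvPowerSeries (Fin n) k) (hg : ∀ i, g i ∈ Mq k n 1)
    {r r' : ℕ} (f : MvPowerSeries (Fin n) k) {γ : Fin n →₀ ℕ}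
    (h : deg γ < r) (h' : r ≤ r') :
    MvPowerSeries.coeff (R := k) γ (Phir g r' f) = MvPowerSeries.coeff (R := k) γ (Phir g r f) := by
  rw [Phir, Phir, map_sum, map_sum]
  refine (Finset.sum_subset (Br_mono h') fun β hβ hβ' => ?_).symm
  rw [mem_Br] at hβ'
  push_neg at hβ'
  have hW : (MvPowerSeries.C (σ := Fin n) (R := k)) (MvPowerSeries.coeff (R := k) β f) * W g β ∈ Mq k n (deg β) :=
    Ideal.mul_mem_left _ _ (W_mem g hg β)
  exact hW γ (by omega)


variable {k : Type*} [Field k] {n : ℕ}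

lemma coeff_mul_congr {A A' B B' : MvPowerSeries (Fin n) k} (γ : Fin n →₀ ℕ)
    (hA : ∀ δ ≤ γ, MvPowerSeries.coeff (R := k) δ A = MvPowerSeries.coeff (R := k) δ A')
    (hB : ∀ δ ≤ γ, MvPowerSeries.coeff (R := k) δ B = MvPowerSeries.coeff (R := k) δ B') :
    MvPowerSeries.coeff (R := k) γ (A * B) = MvPowerSeries.coeff (R := k) γ (A' * B') := by
  rw [MvPowerSeries.coeff_mul, MvPowerSeries.coeff_mul]
  refine Finset.sum_congr rfl fun p hp => ?_
  rw [Finset.HasAntidiagonal.mem_antidiagonal] at hp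
  rw [hA p.1 (hp ▸ self_le_add_right p.1 p.2), hB p.2 (hp ▸ self_le_add_left p.2 p.1)]

/-- the substitution map, defined coefficientwise -/
def PhiFun (g : Fin n → MvPowerSeries (Fin n) k) (f : MvPowerSeries (Fin n) k) :
    MvPowerSeries (Fin n) k :=
  fun γ => MvPowerSeries.coeff (R := k) γ (Phir g (deg γ + 1) f)

lemma coeff_PhiFun (g : Fin n → MvPowerSeries (Fin n) k) (f : MvPowerSeries (Fin n) k)
    (γ : Fin n →₀ ℕ) :
    MvPowerSeries.coeff (R := k) γ (PhiFun g f) = MvPowerSeries.coeff (R := k) γ (Phir g (deg γ + 1) f) := rfl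

lemma coeff_PhiFun_eq (g : Fin n → MvPowerSeries (Fin n) k) (hg : ∀ i, g i ∈ Mq k n 1)
    (f : MvPowerSeries (Fin n) k) {γ : Fin n →₀ ℕ} {r : ℕ} (h : deg γ < r) :
    MvPowerSeries.coeff (R := k) γ (PhiFun g f) = MvPowerSeries.coeff (R := k) γ (Phir g r f) := by
  rw [coeff_PhiFun]
  rcases le_or_gt r (deg γ + 1) with hr | hr
  · exact coeff_Phir_stable g hg f h hr
  · exact (coeff_Phir_stable g hg f (by omega) hr.le).symm

lemma Phir_add (g : Fin n → MvPowerSeries (Fin n) k) (r : ℕ) (u v : MvPowerSeries (Fin n) k) :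
    Phir g r (u + v) = Phir g r u + Phir g r v := by
  simp [Phir, map_add, add_mul, Finset.sum_add_distrib]

lemma Phir_C (g : Fin n → MvPowerSeries (Fin n) k) {r : ℕ} (h : 0 < r) (c : k) :
    Phir g r ((MvPowerSeries.C (σ := Fin n) (R := k)) c) = (MvPowerSeries.C (σ := Fin n) (R := k)) c := by
  rw [Phir]
  have h1 : ∀ β ∈ Br n r,
      (MvPowerSeries.C (σ := Fin n) (R := k)) (MvPowerSeries.coeff (R := k) β ((MvPowerSeries.C (σ := Fin n) (R := k)) c)) * W g β
        = if β = 0 then (MvPowerSeries.C (σ := Fin n) (R := k)) c * W g β else 0 := by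
    intro β _
    rw [MvPowerSeries.coeff_C]
    split
    · rfl
    · rw [map_zero, zero_mul]
  rw [Finset.sum_congr rfl h1, Finset.sum_ite_eq' (Br n r) 0 (fun β => (MvPowerSeries.C (σ := Fin n) (R := k)) c * W g β),
    if_pos (mem_Br.mpr (by simpa [deg] using h)), W_zero, mul_one]

lemma Phir_X (g : Fin n → MvPowerSeries (Fin n) k) {r : ℕ} (h : 1 < r) (i : Fin n) :
    Phir g r (MvPowerSeries.X i) = MvPowerSeries.X i + g i := by
  rw [Phir]
  have h1 : ∀ β ∈ Br n r,
      (MvPowerSeries.C (σ := Fin n) (R := k)) (MvPowerSeries.coeff (R := k) β (MvPowerSeries.X i)) * W g β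
        = if β = Finsupp.single i 1 then W g β else 0 := by
    intro β _
    rw [MvPowerSeries.coeff_X]
    split
    · next hh => rw [map_one, one_mul]
    · next hh => rw [map_zero, zero_mul]
  rw [Finset.sum_congr rfl h1, Finset.sum_ite_eq' (Br n r) (Finsupp.single i 1) (fun β => W g β),
    if_pos (mem_Br.mpr (by rwa [deg_single])), W_single]

lemma Phir_mul_coeff (g : Fin n → MvPowerSeries (Fin n) k) (hg : ∀ i, g i ∈ Mq k n 1)
    (u v : MvPowerSeries (Fin n) k) {γ : Fin n →₀ ℕ} {r : ℕ} (h : deg γ < r) :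
    MvPowerSeries.coeff (R := k) γ (Phir g r (u * v)) =
      MvPowerSeries.coeff (R := k) γ (Phir g r u * Phir g r v) := by
  classical
  set F : (Fin n →₀ ℕ) × (Fin n →₀ ℕ) → k := fun p =>
    MvPowerSeries.coeff (R := k) p.1 u * MvPowerSeries.coeff (R := k) p.2 v *
      MvPowerSeries.coeff (R := k) γ (W g (p.1 + p.2)) with hF
  -- LHS
  have hLHS : MvPowerSeries.coeff (R := k) γ (Phir g r (u * v)) =
      ∑ β ∈ Br n r, ∑ p ∈ Finset.HasAntidiagonal.antidiagonal β, F p := by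
    rw [Phir, map_sum]
    refine Finset.sum_congr rfl fun β hβ => ?_
    rw [MvPowerSeries.coeff_C_mul, MvPowerSeries.coeff_mul, Finset.sum_mul]
    refine Finset.sum_congr rfl fun p hp => ?_
    rw [Finset.HasAntidiagonal.mem_antidiagonal] at hp
    rw [hF]
    dsimp only
    rw [hp]
  -- biUnion
  have hdisj : ∀ β₁ ∈ (Br n r : Finset _), ∀ β₂ ∈ (Br n r : Finset _), β₁ ≠ β₂ →
      Disjoint (Finset.HasAntidiagonal.antidiagonal β₁) (Finset.HasAntidiagonal.antidiagonal β₂) := by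
    intro β₁ _ β₂ _ hne
    rw [Finset.disjoint_left]
    intro p hp1 hp2
    rw [Finset.HasAntidiagonal.mem_antidiagonal] at hp1 hp2
    exact hne (hp1 ▸ hp2 ▸ rfl)
  have hbi : ∑ β ∈ Br n r, ∑ p ∈ Finset.HasAntidiagonal.antidiagonal β, F p
      = ∑ p ∈ (Br n r).biUnion (fun β => Finset.HasAntidiagonal.antidiagonal β), F p :=
    (Finset.sum_biUnion hdisj).symm
  -- identify the biUnion
  have hset : (Br n r).biUnion (fun β => Finset.HasAntidiagonal.antidiagonal β)
      = (Br n r ×ˢ Br n r).filter (fun p => p.1 + p.2 ∈ Br n r) := by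
    ext p
    simp only [Finset.mem_biUnion, Finset.mem_filter, Finset.mem_product, Finset.HasAntidiagonal.mem_antidiagonal]
    constructor
    · rintro ⟨β, hβ, rfl⟩
      refine ⟨⟨?_, ?_⟩, hβ⟩
      · exact mem_Br.mpr (lt_of_le_of_lt (by rw [deg_add]; omega) (mem_Br.mp hβ))
      · exact mem_Br.mpr (lt_of_le_of_lt (by rw [deg_add]; omega) (mem_Br.mp hβ))
    · rintro ⟨_, hs⟩
      exact ⟨p.1 + p.2, hs, rfl⟩
  -- drop the filter
  have hfil : ∑ p ∈ (Br n r ×ˢ Br n r).filter (fun p => p.1 + p.2 ∈ Br n r), F p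
      = ∑ p ∈ Br n r ×ˢ Br n r, F p := by
    refine Finset.sum_subset (Finset.filter_subset _ _) fun p hp hp' => ?_
    have hdeg : ¬ deg (p.1 + p.2) < r := by
      intro hd
      exact hp' (Finset.mem_filter.mpr ⟨hp, mem_Br.mpr hd⟩)
    rw [hF]
    dsimp only
    rw [W_mem g hg (p.1 + p.2) γ (by omega), mul_zero]
  -- RHS
  have hRHS : MvPowerSeries.coeff (R := k) γ (Phir g r u * Phir g r v)
      = ∑ p ∈ Br n r ×ˢ Br n r, F p := by
    rw [Phir, Phir, Finset.sum_mul_sum, map_sum, Finset.sum_product]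
    refine Finset.sum_congr rfl fun β₁ _ => ?_
    rw [map_sum]
    refine Finset.sum_congr rfl fun β₂ _ => ?_
    have : ((MvPowerSeries.C (σ := Fin n) (R := k)) (MvPowerSeries.coeff (R := k) β₁ u) * W g β₁) *
        ((MvPowerSeries.C (σ := Fin n) (R := k)) (MvPowerSeries.coeff (R := k) β₂ v) * W g β₂)
        = (MvPowerSeries.C (σ := Fin n) (R := k)) (MvPowerSeries.coeff (R := k) β₁ u) *
          ((MvPowerSeries.C (σ := Fin n) (R := k)) (MvPowerSeries.coeff (R := k) β₂ v) * W g (β₁ + β₂)) := by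
      rw [W_add]; ring
    rw [this, MvPowerSeries.coeff_C_mul, MvPowerSeries.coeff_C_mul, hF]
    dsimp only
    ring
  rw [hLHS, hbi, hset, hfil, hRHS]


variable {k : Type*} [Field k] {n : ℕ}

/-- the substitution algebra homomorphism -/
def PhiAlgHom (g : Fin n → MvPowerSeries (Fin n) k) (hg : ∀ i, g i ∈ Mq k n 1) :
    MvPowerSeries (Fin n) k →ₐ[k] MvPowerSeries (Fin n) k where
  toFun := PhiFun g
  map_one' := by
    apply MvPowerSeries.ext; intro γ
    rw [coeff_PhiFun, ← map_one ((MvPowerSeries.C (σ := Fin n) (R := k))), Phir_C g (by omega)]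
  map_mul' := by
    intro u v
    apply MvPowerSeries.ext; intro γ
    rw [coeff_PhiFun, Phir_mul_coeff g hg u v (by omega : deg γ < deg γ + 1)]
    show _ = MvPowerSeries.coeff (R := k) γ (PhiFun g u * PhiFun g v)
    exact coeff_mul_congr γ
      (fun δ hδ => (coeff_PhiFun_eq g hg u (show deg δ < deg γ + 1 by
        have := deg_mono hδ; omega)).symm)
      (fun δ hδ => (coeff_PhiFun_eq g hg v (show deg δ < deg γ + 1 by
        have := deg_mono hδ; omega)).symm)
  map_zero' := by
    apply MvPowerSeries.ext; intro γ
    rw [coeff_PhiFun, ← map_zero ((MvPowerSeries.C (σ := Fin n) (R := k))), Phir_C g (by omega)]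
  map_add' := by
    intro u v
    apply MvPowerSeries.ext; intro γ
    rw [coeff_PhiFun, Phir_add, map_add, map_add, coeff_PhiFun, coeff_PhiFun]
  commutes' := by
    intro c
    apply MvPowerSeries.ext; intro γ
    rw [MvPowerSeries.algebraMap_apply]
    show MvPowerSeries.coeff (R := k) γ (PhiFun g _) = _
    rw [coeff_PhiFun]
    rw [show (algebraMap k k) c = c from rfl]
    rw [Phir_C g (by omega)]

lemma PhiAlgHom_X (g : Fin n → MvPowerSeries (Fin n) k) (hg : ∀ i, g i ∈ Mq k n 1) (i : Fin n) :
    PhiAlgHom g hg (MvPowerSeries.X i) = MvPowerSeries.X i + g i := by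
  apply MvPowerSeries.ext; intro γ
  show MvPowerSeries.coeff (R := k) γ (PhiFun g _) = _
  rw [coeff_PhiFun_eq g hg _ (by omega : deg γ < deg γ + 2), Phir_X g (by omega)]

section AbstractPhi

variable (g : Fin n → MvPowerSeries (Fin n) k)
variable (φ : MvPowerSeries (Fin n) k →ₐ[k] MvPowerSeries (Fin n) k)

lemma phi_C (c : k) : φ ((MvPowerSeries.C (σ := Fin n) (R := k)) c) = (MvPowerSeries.C (σ := Fin n) (R := k)) c := by
  have h := φ.commutes c
  rwa [MvPowerSeries.algebraMap_apply, show (algebraMap k k) c = c from rfl] at h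

lemma phi_monomial (hX : ∀ i, φ (MvPowerSeries.X i) = MvPowerSeries.X i + g i)
    (β : Fin n →₀ ℕ) (c : k) :
    φ (MvPowerSeries.monomial (R := k) β c) = (MvPowerSeries.C (σ := Fin n) (R := k)) c * W g β := by
  rw [monomial_eq_C_mul, ← prod_X_pow, map_mul, phi_C, map_prod]
  congr 1
  refine Finset.prod_congr rfl fun i _ => ?_
  rw [map_pow, hX i]

lemma phi_Pt (hX : ∀ i, φ (MvPowerSeries.X i) = MvPowerSeries.X i + g i)
    (r : ℕ) (f : MvPowerSeries (Fin n) k) :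
    φ (Pt r f) = Phir g r f := by
  rw [Pt, map_sum, Phir]
  exact Finset.sum_congr rfl fun β _ => phi_monomial g φ hX β _

/-- any `k`-algebra endomorphism preserves the maximal ideal -/
lemma phi_mem_mIdeal {w : MvPowerSeries (Fin n) k} (hw : w ∈ mIdeal k n) :
    φ w ∈ mIdeal k n := by
  rw [mIdeal, RingHom.mem_ker] at hw ⊢
  by_contra hc
  set c := (MvPowerSeries.constantCoeff (σ := Fin n) (R := k)) (φ w) with hcdef
  have hu : IsUnit (w - (MvPowerSeries.C (σ := Fin n) (R := k)) c) := by
    rw [MvPowerSeries.isUnit_iff_constantCoeff]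
    rw [map_sub, hw, MvPowerSeries.constantCoeff_C, zero_sub]
    exact (isUnit_iff_ne_zero.mpr (neg_ne_zero.mpr hc))
  have h2 : φ (w - (MvPowerSeries.C (σ := Fin n) (R := k)) c) = φ w - (MvPowerSeries.C (σ := Fin n) (R := k)) c := by
    rw [map_sub, phi_C]
  have h3 : IsUnit (φ w - (MvPowerSeries.C (σ := Fin n) (R := k)) c) := h2 ▸ hu.map φ
  rw [MvPowerSeries.isUnit_iff_constantCoeff, map_sub, MvPowerSeries.constantCoeff_C,
    ← hcdef, sub_self] at h3
  exact (isUnit_iff_ne_zero.mp h3) rfl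

lemma phi_mem_Mq {q : ℕ} {w : MvPowerSeries (Fin n) k} (hw : w ∈ Mq k n q) :
    φ w ∈ Mq k n q := by
  rw [← pow_mIdeal_eq] at hw ⊢
  have h1 : Ideal.map (φ : MvPowerSeries (Fin n) k →+* MvPowerSeries (Fin n) k)
      (mIdeal k n) ≤ mIdeal k n :=
    Ideal.map_le_iff_le_comap.mpr fun u hu => phi_mem_mIdeal φ hu
  have h2 : φ w ∈ Ideal.map (φ : MvPowerSeries (Fin n) k →+* MvPowerSeries (Fin n) k)
      (mIdeal k n ^ q) := Ideal.mem_map_of_mem _ hw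
  rw [Ideal.map_pow] at h2
  exact Ideal.pow_right_mono h1 q h2

end AbstractPhi

/-- induction on finitely supported exponents by adding one variable at a time -/
lemma finsupp_add_single_induction {P : (Fin n →₀ ℕ) → Prop} (h0 : P 0)
    (hstep : ∀ β (i : Fin n), P β → P (β + Finsupp.single i 1)) : ∀ β, P β := by
  have key : ∀ d (β : Fin n →₀ ℕ), deg β = d → P β := by
    intro d
    induction d with
    | zero => intro β h; rw [deg_eq_zero h]; exact h0
    | succ d ih =>
      intro β h
      have hne : β ≠ 0 := by
        intro h0'
        rw [h0'] at h
        simp [deg] at h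
      obtain ⟨i, hi⟩ : ∃ i, β i ≠ 0 := by
        by_contra hall
        push_neg at hall
        exact hne (Finsupp.ext fun j => hall j)
      have hle : Finsupp.single i 1 ≤ β := Finsupp.single_le_iff.mpr (by omega)
      have heq : β = (β - Finsupp.single i 1) + Finsupp.single i 1 :=
        (tsub_add_cancel_of_le hle).symm
      rw [heq]
      apply hstep
      apply ih
      have : deg ((β - Finsupp.single i 1) + Finsupp.single i 1) = d + 1 := by rw [← heq, h]
      rw [deg_add, deg_single] at this
      omega
  exact fun β => key (deg β) β rfl

lemma W_sub_monomial {g : Fin n → MvPowerSeries (Fin n) k} (hg2 : ∀ i, g i ∈ Mq k n 2)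
    (β : Fin n →₀ ℕ) :
    W g β - MvPowerSeries.monomial (R := k) β 1 ∈ Mq k n (deg β + 1) := by
  have hg1 : ∀ i, g i ∈ Mq k n 1 := fun i => Mq_mono (by omega) (hg2 i)
  induction β using finsupp_add_single_induction with
  | h0 =>
    rw [W_zero, ← prod_X_pow]
    simp
  | hstep β i ih =>
    have hW : W g (β + Finsupp.single i 1) = W g β * (MvPowerSeries.X i + g i) := by
      rw [W_add, W_single]
    have hM : MvPowerSeries.monomial (R := k) (β + Finsupp.single i 1) (1 : k)
        = MvPowerSeries.monomial (R := k) β 1 * MvPowerSeries.monomial (R := k) (Finsupp.single i 1) 1 := by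
      rw [MvPowerSeries.monomial_mul_monomial, one_mul]
    have hXi : (MvPowerSeries.monomial (R := k) (Finsupp.single i 1) (1 : k))
        = MvPowerSeries.X i := rfl
    have hsplit : W g (β + Finsupp.single i 1)
        - MvPowerSeries.monomial (R := k) (β + Finsupp.single i 1) 1
        = (W g β - MvPowerSeries.monomial (R := k) β 1) * MvPowerSeries.X i + W g β * g i := by
      rw [hW, hM, hXi]; ring
    rw [hsplit, deg_add, deg_single]
    refine add_mem ?_ ?_
    · have := mul_mem_Mq ih (X_mem_Mq i)
      exact this
    · have := mul_mem_Mq (W_mem g hg1 β) (hg2 i)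
      exact Mq_mono (by omega) this

/-- fundamental approximation: `φ` moves elements of `Mq q` by something in `Mq (q+1)` -/
lemma key_approx {g : Fin n → MvPowerSeries (Fin n) k}
    (φ : MvPowerSeries (Fin n) k →ₐ[k] MvPowerSeries (Fin n) k)
    (hX : ∀ i, φ (MvPowerSeries.X i) = MvPowerSeries.X i + g i)
    (hg2 : ∀ i, g i ∈ Mq k n 2)
    {q : ℕ} {w : MvPowerSeries (Fin n) k} (hw : w ∈ Mq k n q) :
    φ w - w ∈ Mq k n (q + 1) := by
  have hg1 : ∀ i, g i ∈ Mq k n 1 := fun i => Mq_mono (by omega) (hg2 i)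
  have hR : w - Pt (q + 1) w ∈ Mq k n (q + 1) := sub_Pt_mem (q + 1) w
  have hsplit : φ w - w = (φ (Pt (q + 1) w) - Pt (q + 1) w)
      + ((φ (w - Pt (q + 1) w)) - (w - Pt (q + 1) w)) := by
    rw [map_sub]; ring
  rw [hsplit]
  refine add_mem ?_ (sub_mem (phi_mem_Mq φ hR) hR)
  rw [phi_Pt g φ hX, Phir, Pt, ← Finset.sum_sub_distrib]
  refine Submodule.sum_mem _ fun β hβ => ?_
  rcases eq_or_ne (MvPowerSeries.coeff (R := k) β w) 0 with hc | hc
  · rw [hc, map_zero, map_zero, zero_mul, sub_zero]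
    exact zero_mem _
  · have hdeg : q ≤ deg β := by
      by_contra hlt
      exact hc (hw β (by omega))
    rw [monomial_eq_C_mul, ← mul_sub]
    refine Ideal.mul_mem_left _ _ ?_
    exact Mq_mono (by omega) (W_sub_monomial hg2 β)


variable {k : Type*} [Field k] {n : ℕ}

section Bij

variable {g : Fin n → MvPowerSeries (Fin n) k}
variable (φ : MvPowerSeries (Fin n) k →ₐ[k] MvPowerSeries (Fin n) k)
variable (hX : ∀ i, φ (MvPowerSeries.X i) = MvPowerSeries.X i + g i)
variable (hg2 : ∀ i, g i ∈ Mq k n 2)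
include hX hg2

lemma phi_injective : Function.Injective φ := by
  rw [injective_iff_map_eq_zero]
  intro w hw
  apply eq_zero_of_forall_mem_Mq
  intro q
  induction q with
  | zero => rw [Mq_zero]; trivial
  | succ q ih =>
    have h1 : w - φ w ∈ Mq k n (q + 1) := by
      have := key_approx φ hX hg2 ih
      have hneg := neg_mem this
      rwa [neg_sub] at hneg
    rwa [hw, sub_zero] at h1

/-- iterative approximation of a preimage of `v` -/
def approxSeq (v : MvPowerSeries (Fin n) k) : ℕ → MvPowerSeries (Fin n) k
  | 0 => 0
  | t + 1 => approxSeq v t + (v - φ (approxSeq v t))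

lemma approxSeq_invariant (v : MvPowerSeries (Fin n) k) (t : ℕ) :
    v - φ (approxSeq φ v t) ∈ Mq k n t := by
  induction t with
  | zero => rw [Mq_zero]; trivial
  | succ t ih =>
    have hstep : v - φ (approxSeq φ v (t + 1))
        = (v - φ (approxSeq φ v t)) - φ (v - φ (approxSeq φ v t)) := by
      rw [approxSeq, map_add]
      ring
    rw [hstep]
    have := key_approx φ hX hg2 ih
    have hneg := neg_mem this
    rwa [neg_sub] at hneg

lemma approxSeq_diff (v : MvPowerSeries (Fin n) k) (t s : ℕ) :
    approxSeq φ v (t + s) - approxSeq φ v t ∈ Mq k n t := by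
  induction s with
  | zero => rw [Nat.add_zero, sub_self]; exact zero_mem _
  | succ s ih =>
    have : approxSeq φ v (t + (s + 1)) - approxSeq φ v t
        = (approxSeq φ v (t + s) - approxSeq φ v t) + (v - φ (approxSeq φ v (t + s))) := by
      rw [show t + (s + 1) = (t + s) + 1 from rfl, approxSeq]
      ring
    rw [this]
    exact add_mem ih (Mq_mono (by omega) (approxSeq_invariant φ hX hg2 v (t + s)))

/-- the limit of the approximation sequence -/
def approxLim (v : MvPowerSeries (Fin n) k) : MvPowerSeries (Fin n) k :=
  fun γ => MvPowerSeries.coeff (R := k) γ (approxSeq φ v (deg γ + 1))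

lemma approxLim_sub_mem (v : MvPowerSeries (Fin n) k) (t : ℕ) :
    approxLim φ v - approxSeq φ v t ∈ Mq k n t := by
  intro γ hγ
  rw [map_sub]
  have h1 : MvPowerSeries.coeff (R := k) γ (approxLim φ v)
      = MvPowerSeries.coeff (R := k) γ (approxSeq φ v (deg γ + 1)) := rfl
  rw [h1]
  have h2 : approxSeq φ v t - approxSeq φ v (deg γ + 1) ∈ Mq k n (deg γ + 1) := by
    have := approxSeq_diff φ hX hg2 v (deg γ + 1) (t - (deg γ + 1))
    rwa [Nat.add_sub_cancel' (by omega : deg γ + 1 ≤ t)] at this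
  have h3 := h2 γ (by omega)
  rw [map_sub, sub_eq_zero] at h3
  rw [h3, sub_self]

lemma phi_surjective : Function.Surjective φ := by
  intro v
  refine ⟨approxLim φ v, ?_⟩
  have : φ (approxLim φ v) - v = φ (approxLim φ v - approxSeq φ v 0) + (φ (approxSeq φ v 0) - v) := by
    rw [map_sub]; ring
  apply sub_eq_zero.mp
  apply eq_zero_of_forall_mem_Mq
  intro t
  have hsplit : φ (approxLim φ v) - v
      = φ (approxLim φ v - approxSeq φ v t) - (v - φ (approxSeq φ v t)) := by
    rw [map_sub]; ring
  rw [hsplit]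
  exact sub_mem (phi_mem_Mq φ (approxLim_sub_mem φ hX hg2 v t))
    (approxSeq_invariant φ hX hg2 v t)

end Bij

variable {k : Type*} [Field k] {n : ℕ}

/-- first-order (linear) part of the Taylor expansion of a monomial -/
def Lsum (g : Fin n → MvPowerSeries (Fin n) k) (β : Fin n →₀ ℕ) : MvPowerSeries (Fin n) k :=
  ∑ j, (β j) • (g j * MvPowerSeries.monomial (R := k) (β - Finsupp.single j 1) 1)

lemma deg_sub_single (β : Fin n →₀ ℕ) (j : Fin n) :
    deg β ≤ deg (β - Finsupp.single j 1) + 1 := by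
  have h : β ≤ (β - Finsupp.single j 1) + Finsupp.single j 1 := by
    intro l
    rw [Finsupp.add_apply, Finsupp.tsub_apply]
    rcases eq_or_ne l j with rfl | hne
    · rw [Finsupp.single_eq_same]; omega
    · rw [Finsupp.single_eq_of_ne' (Ne.symm hne)]; omega
  have := deg_mono h
  rwa [deg_add, deg_single] at this

lemma sub_single_add (β : Fin n →₀ ℕ) (i j : Fin n) (hij : j ≠ i) :
    (β + Finsupp.single i 1) - Finsupp.single j 1
      = (β - Finsupp.single j 1) + Finsupp.single i 1 := by
  ext l
  simp only [Finsupp.tsub_apply, Finsupp.add_apply, Finsupp.single_apply]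
  split_ifs <;> omega

lemma Lsum_step (g : Fin n → MvPowerSeries (Fin n) k) (β : Fin n →₀ ℕ) (i : Fin n) :
    Lsum g (β + Finsupp.single i 1)
      = MvPowerSeries.X i * Lsum g β + g i * MvPowerSeries.monomial (R := k) β 1 := by
  have hXM : ∀ δ : Fin n →₀ ℕ, MvPowerSeries.X i * MvPowerSeries.monomial (R := k) δ (1 : k)
      = MvPowerSeries.monomial (R := k) (δ + Finsupp.single i 1) 1 := by
    intro δ
    rw [show (MvPowerSeries.X i : MvPowerSeries (Fin n) k)
        = MvPowerSeries.monomial (R := k) (Finsupp.single i 1) 1 from rfl,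
      MvPowerSeries.monomial_mul_monomial, one_mul, add_comm]
  set β' := β + Finsupp.single i 1 with hβ'
  have hterm : ∀ j, (β' j)
        • (g j * MvPowerSeries.monomial (R := k) (β' - Finsupp.single j 1) 1)
      = MvPowerSeries.X i * ((β j) • (g j * MvPowerSeries.monomial (R := k) (β - Finsupp.single j 1) 1))
        + (if j = i then g i * MvPowerSeries.monomial (R := k) β 1 else 0) := by
    intro j
    rcases eq_or_ne j i with rfl | hji
    · rw [if_pos rfl, hβ', Finsupp.add_apply, Finsupp.single_eq_same, add_tsub_cancel_right]
      rcases Nat.eq_zero_or_pos (β j) with h0 | hpos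
      · simp [h0]
      · have hle : Finsupp.single j 1 ≤ β := Finsupp.single_le_iff.mpr hpos
        have hM : MvPowerSeries.X j * MvPowerSeries.monomial (R := k) (β - Finsupp.single j 1) (1:k)
            = MvPowerSeries.monomial (R := k) β 1 := by
          rw [hXM, tsub_add_cancel_of_le hle]
        calc (β j + 1) • (g j * MvPowerSeries.monomial (R := k) β 1)
            = (β j) • (g j * MvPowerSeries.monomial (R := k) β 1)
              + g j * MvPowerSeries.monomial (R := k) β 1 := succ_nsmul _ _
          _ = MvPowerSeries.X j * ((β j) • (g j * MvPowerSeries.monomial (R := k) (β - Finsupp.single j 1) 1))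
              + g j * MvPowerSeries.monomial (R := k) β 1 := by
              rw [mul_smul_comm]
              congr 2
              rw [← hM]
              ring
    · rw [if_neg hji, add_zero, hβ', Finsupp.add_apply, Finsupp.single_eq_of_ne' (Ne.symm hji),
        add_zero, sub_single_add β i j hji, ← hXM, mul_smul_comm]
      congr 1
      ring
  rw [Lsum, Lsum, Finset.mul_sum]
  rw [Finset.sum_congr rfl (fun j _ => hterm j), Finset.sum_add_distrib,
    Finset.sum_ite_eq' Finset.univ i
      (fun _ => g i * MvPowerSeries.monomial (R := k) β 1), if_pos (Finset.mem_univ i)]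

lemma Etaylor {g : Fin n → MvPowerSeries (Fin n) k} (hg1 : ∀ i, g i ∈ Mq k n 1)
    (β : Fin n →₀ ℕ) :
    ∃ h : Fin n → Fin n → MvPowerSeries (Fin n) k,
      (∀ i j, h i j ∈ Mq k n (deg β - 2)) ∧
      W g β - MvPowerSeries.monomial (R := k) β 1 - Lsum g β = ∑ i, ∑ j, g i * g j * h i j := by
  induction β using finsupp_add_single_induction with
  | h0 =>
    refine ⟨fun _ _ => 0, fun i j => zero_mem _, ?_⟩
    have h1 : MvPowerSeries.monomial (R := k) (0 : Fin n →₀ ℕ) (1 : k) = 1 := by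
      rw [← prod_X_pow]; simp
    rw [W_zero, h1, Lsum]
    simp
  | hstep β i ih =>
    obtain ⟨h, hmem, heq⟩ := ih
    set newh : Fin n → Fin n → MvPowerSeries (Fin n) k := fun i' j =>
      (MvPowerSeries.X i + g i) * h i' j +
        (if i' = i then (β j) • MvPowerSeries.monomial (R := k) (β - Finsupp.single j 1) 1 else 0)
      with hnewh
    refine ⟨newh, ?_, ?_⟩
    · intro i' j
      refine add_mem ?_ ?_
      · have hm := mul_mem_Mq (add_mem (X_mem_Mq i) (hg1 i)) (hmem i' j)
        exact Mq_mono (by rw [deg_add, deg_single]; omega) hm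
      · split
        · have hmm := monomial_mem_Mq (k := k) (β - Finsupp.single j 1) (1 : k)
          have h2 := nsmul_mem hmm (β j)
          refine Mq_mono ?_ h2
          have := deg_sub_single β j
          rw [deg_add, deg_single]
          omega
        · exact zero_mem _
    · have hW : W g (β + Finsupp.single i 1) = (MvPowerSeries.X i + g i) * W g β := by
        rw [W_add, W_single, mul_comm]
      have hM : MvPowerSeries.monomial (R := k) (β + Finsupp.single i 1) (1 : k)
          = MvPowerSeries.X i * MvPowerSeries.monomial (R := k) β 1 := by
        rw [show (MvPowerSeries.X i : MvPowerSeries (Fin n) k)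
            = MvPowerSeries.monomial (R := k) (Finsupp.single i 1) 1 from rfl,
          MvPowerSeries.monomial_mul_monomial, one_mul, add_comm]
      rw [hW, hM, Lsum_step]
      calc (MvPowerSeries.X i + g i) * W g β - MvPowerSeries.X i * MvPowerSeries.monomial (R := k) β 1
            - (MvPowerSeries.X i * Lsum g β + g i * MvPowerSeries.monomial (R := k) β 1)
          = (MvPowerSeries.X i + g i) * (W g β - MvPowerSeries.monomial (R := k) β 1 - Lsum g β)
            + g i * Lsum g β := by ring
        _ = (MvPowerSeries.X i + g i) * (∑ i', ∑ j, g i' * g j * h i' j) + g i * Lsum g β := by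
            rw [heq]
        _ = ∑ i', ((MvPowerSeries.X i + g i) * (∑ j, g i' * g j * h i' j)
              + (if i' = i then g i * Lsum g β else 0)) := by
            rw [Finset.sum_add_distrib, ← Finset.mul_sum,
              Finset.sum_ite_eq' Finset.univ i (fun _ => g i * Lsum g β),
              if_pos (Finset.mem_univ i)]
        _ = ∑ i', ∑ j, g i' * g j * newh i' j := by
            refine Finset.sum_congr rfl fun i' _ => ?_
            by_cases hii : i' = i
            · subst hii
              rw [if_pos rfl, Finset.mul_sum, Lsum, Finset.mul_sum, ← Finset.sum_add_distrib]
              refine Finset.sum_congr rfl fun j _ => ?_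
              rw [hnewh]
              simp only [if_pos]
              simp only [nsmul_eq_mul]
              ring
            · rw [if_neg hii, add_zero, Finset.mul_sum]
              refine Finset.sum_congr rfl fun j _ => ?_
              rw [hnewh]
              simp only [if_neg hii, add_zero]
              ring



variable {k : Type*} [Field k] {n : ℕ}

variable {g : Fin n → MvPowerSeries (Fin n) k}

/-- a chosen quadratic-remainder decomposition for each monomial -/
def hch (hg1 : ∀ i, g i ∈ Mq k n 1) (β : Fin n →₀ ℕ) : Fin n → Fin n → MvPowerSeries (Fin n) k :=
  Classical.choose (Etaylor hg1 β)

lemma hch_mem (hg1 : ∀ i, g i ∈ Mq k n 1) (β : Fin n →₀ ℕ) (i j : Fin n) :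
    hch hg1 β i j ∈ Mq k n (deg β - 2) :=
  (Classical.choose_spec (Etaylor hg1 β)).1 i j

lemma hch_eq (hg1 : ∀ i, g i ∈ Mq k n 1) (β : Fin n →₀ ℕ) :
    W g β - MvPowerSeries.monomial (R := k) β 1 - Lsum g β
      = ∑ i, ∑ j, g i * g j * hch hg1 β i j :=
  (Classical.choose_spec (Etaylor hg1 β)).2

/-- partial sums of the quadratic remainder coefficient series -/
def Hr (hg1 : ∀ i, g i ∈ Mq k n 1) (f : MvPowerSeries (Fin n) k) (r : ℕ) (i j : Fin n) :
    MvPowerSeries (Fin n) k :=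
  ∑ β ∈ Br n r, (MvPowerSeries.C (σ := Fin n) (R := k)) (MvPowerSeries.coeff (R := k) β f) * hch hg1 β i j

/-- the quadratic remainder coefficient series, as a limit -/
def Hfun (hg1 : ∀ i, g i ∈ Mq k n 1) (f : MvPowerSeries (Fin n) k) (i j : Fin n) :
    MvPowerSeries (Fin n) k :=
  fun γ => MvPowerSeries.coeff (R := k) γ (Hr hg1 f (deg γ + 3) i j)

lemma coeff_Hr_stable (hg1 : ∀ i, g i ∈ Mq k n 1) (f : MvPowerSeries (Fin n) k)
    {γ : Fin n →₀ ℕ} {r r' : ℕ} (h : deg γ + 3 ≤ r) (h' : r ≤ r') (i j : Fin n) :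
    MvPowerSeries.coeff (R := k) γ (Hr hg1 f r' i j) = MvPowerSeries.coeff (R := k) γ (Hr hg1 f r i j) := by
  rw [Hr, Hr, map_sum, map_sum]
  refine (Finset.sum_subset (Br_mono h') fun β hβ hβ' => ?_).symm
  rw [mem_Br] at hβ'
  push_neg at hβ'
  have hmem : (MvPowerSeries.C (σ := Fin n) (R := k)) (MvPowerSeries.coeff (R := k) β f) * hch hg1 β i j
      ∈ Mq k n (deg β - 2) := Ideal.mul_mem_left _ _ (hch_mem hg1 β i j)
  exact hmem γ (by omega)

lemma coeff_Hfun_eq (hg1 : ∀ i, g i ∈ Mq k n 1) (f : MvPowerSeries (Fin n) k)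
    {γ : Fin n →₀ ℕ} {r : ℕ} (h : deg γ + 3 ≤ r) (i j : Fin n) :
    MvPowerSeries.coeff (R := k) γ (Hfun hg1 f i j) = MvPowerSeries.coeff (R := k) γ (Hr hg1 f r i j) := by
  have h0 : MvPowerSeries.coeff (R := k) γ (Hfun hg1 f i j)
      = MvPowerSeries.coeff (R := k) γ (Hr hg1 f (deg γ + 3) i j) := rfl
  rw [h0, ← coeff_Hr_stable hg1 f (le_refl (deg γ + 3)) h i j]

lemma Hfun_mem (hg1 : ∀ i, g i ∈ Mq k n 1) {f : MvPowerSeries (Fin n) k}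
    (hf3 : f ∈ Mq k n 3) (i j : Fin n) :
    Hfun hg1 f i j ∈ Mq k n 1 := by
  intro γ hγ
  have h0 : MvPowerSeries.coeff (R := k) γ (Hfun hg1 f i j)
      = MvPowerSeries.coeff (R := k) γ (Hr hg1 f (deg γ + 3) i j) := rfl
  have hγ0 : γ = 0 := deg_eq_zero (by omega)
  subst hγ0
  rw [h0, Hr, map_sum]
  refine Finset.sum_eq_zero fun β hβ => ?_
  rcases lt_or_ge (deg β) 3 with h3 | h3
  · rw [hf3 β h3, map_zero, zero_mul, map_zero]
  · have hmem : (MvPowerSeries.C (σ := Fin n) (R := k)) (MvPowerSeries.coeff (R := k) β f) * hch hg1 β i j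
        ∈ Mq k n (deg β - 2) := Ideal.mul_mem_left _ _ (hch_mem hg1 β i j)
    exact hmem 0 (by
      have h0 : deg (0 : Fin n →₀ ℕ) = 0 := by simp [deg]
      omega)

/-- the Taylor identity with explicit quadratic remainder -/
lemma taylor_eq (hg1 : ∀ i, g i ∈ Mq k n 1)
    (φ : MvPowerSeries (Fin n) k →ₐ[k] MvPowerSeries (Fin n) k)
    (hX : ∀ i, φ (MvPowerSeries.X i) = MvPowerSeries.X i + g i)
    (f : MvPowerSeries (Fin n) k) :
    φ f - (f + ∑ i, g i * pderiv i f) = ∑ i, ∑ j, (g i * g j) * Hfun hg1 f i j := by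
  apply MvPowerSeries.ext
  intro γ
  set r := deg γ + 3 with hr
  -- (a)
  have ha : MvPowerSeries.coeff (R := k) γ (φ f) = MvPowerSeries.coeff (R := k) γ (Phir g r f) := by
    have hsub : φ f - Phir g r f = φ (f - Pt r f) := by
      rw [map_sub, phi_Pt g φ hX]
    have hmem : φ (f - Pt r f) ∈ Mq k n r := phi_mem_Mq φ (sub_Pt_mem r f)
    have := hmem γ (by omega)
    rw [← hsub, map_sub, sub_eq_zero] at this
    exact this
  -- (b)
  have hb : MvPowerSeries.coeff (R := k) γ f = MvPowerSeries.coeff (R := k) γ (Pt r f) := by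
    rw [coeff_Pt, if_pos (by omega)]
  -- (c)
  have hc : MvPowerSeries.coeff (R := k) γ (∑ i, g i * pderiv i f)
      = MvPowerSeries.coeff (R := k) γ (∑ i, g i * pderiv i (Pt r f)) := by
    have hsub : (∑ i, g i * pderiv i f) - (∑ i, g i * pderiv i (Pt r f))
        = ∑ i, g i * pderiv i (f - Pt r f) := by
      rw [← Finset.sum_sub_distrib]
      refine Finset.sum_congr rfl fun i _ => ?_
      rw [pderiv_sub, mul_sub]
    have hmem : (∑ i, g i * pderiv i (f - Pt r f)) ∈ Mq k n (deg γ + 2) := by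
      refine Submodule.sum_mem _ fun i _ => ?_
      refine Ideal.mul_mem_left _ _ ?_
      exact pderiv_mem_Mq i (by rw [hr] at *; exact sub_Pt_mem r f)
    have := hmem γ (by omega)
    rw [← hsub, map_sub, sub_eq_zero] at this
    exact this
  -- (d) exact identity at level r
  have hd : Phir g r f - Pt r f - ∑ i, g i * pderiv i (Pt r f)
      = ∑ i', ∑ j, (g i' * g j) * Hr hg1 f r i' j := by
    have h1 : ∑ i, g i * pderiv i (Pt r f)
        = ∑ β ∈ Br n r, (MvPowerSeries.C (σ := Fin n) (R := k)) (MvPowerSeries.coeff (R := k) β f) * Lsum g β := by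
      have h2 : ∀ i, pderiv i (Pt r f) = ∑ β ∈ Br n r,
          (β i) • MvPowerSeries.monomial (R := k) (β - Finsupp.single i 1)
            (MvPowerSeries.coeff (R := k) β f) := by
        intro i
        rw [Pt, pderiv_eq_hom, map_sum]
        exact Finset.sum_congr rfl fun β _ => pderiv_monomial i β _
      calc ∑ i, g i * pderiv i (Pt r f)
          = ∑ i, ∑ β ∈ Br n r, g i * ((β i) • MvPowerSeries.monomial (R := k) (β - Finsupp.single i 1)
              (MvPowerSeries.coeff (R := k) β f)) := by
            refine Finset.sum_congr rfl fun i _ => ?_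
            rw [h2 i, Finset.mul_sum]
        _ = ∑ β ∈ Br n r, ∑ i, g i * ((β i) • MvPowerSeries.monomial (R := k) (β - Finsupp.single i 1)
              (MvPowerSeries.coeff (R := k) β f)) := Finset.sum_comm
        _ = ∑ β ∈ Br n r, (MvPowerSeries.C (σ := Fin n) (R := k)) (MvPowerSeries.coeff (R := k) β f) * Lsum g β := by
            refine Finset.sum_congr rfl fun β _ => ?_
            rw [Lsum, Finset.mul_sum]
            refine Finset.sum_congr rfl fun j _ => ?_
            rw [monomial_eq_C_mul]
            simp only [nsmul_eq_mul]
            ring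
    rw [h1, Pt, Phir, ← Finset.sum_sub_distrib, ← Finset.sum_sub_distrib]
    have h3 : ∀ β ∈ Br n r,
        (MvPowerSeries.C (σ := Fin n) (R := k)) (MvPowerSeries.coeff (R := k) β f) * W g β
          - MvPowerSeries.monomial (R := k) β (MvPowerSeries.coeff (R := k) β f)
          - (MvPowerSeries.C (σ := Fin n) (R := k)) (MvPowerSeries.coeff (R := k) β f) * Lsum g β
        = ∑ i', ∑ j, (g i' * g j) *
            ((MvPowerSeries.C (σ := Fin n) (R := k)) (MvPowerSeries.coeff (R := k) β f) * hch hg1 β i' j) := by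
      intro β _
      rw [monomial_eq_C_mul β]
      calc (MvPowerSeries.C (σ := Fin n) (R := k)) (MvPowerSeries.coeff (R := k) β f) * W g β
            - (MvPowerSeries.C (σ := Fin n) (R := k)) (MvPowerSeries.coeff (R := k) β f) * MvPowerSeries.monomial (R := k) β 1
            - (MvPowerSeries.C (σ := Fin n) (R := k)) (MvPowerSeries.coeff (R := k) β f) * Lsum g β
          = (MvPowerSeries.C (σ := Fin n) (R := k)) (MvPowerSeries.coeff (R := k) β f)
            * (W g β - MvPowerSeries.monomial (R := k) β 1 - Lsum g β) := by ring
        _ = (MvPowerSeries.C (σ := Fin n) (R := k)) (MvPowerSeries.coeff (R := k) β f)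
            * (∑ i', ∑ j, g i' * g j * hch hg1 β i' j) := by rw [hch_eq hg1 β]
        _ = ∑ i', ∑ j, (g i' * g j) *
            ((MvPowerSeries.C (σ := Fin n) (R := k)) (MvPowerSeries.coeff (R := k) β f) * hch hg1 β i' j) := by
            rw [Finset.mul_sum]
            refine Finset.sum_congr rfl fun i' _ => ?_
            rw [Finset.mul_sum]
            refine Finset.sum_congr rfl fun j _ => ?_
            ring
    rw [Finset.sum_congr rfl h3, Finset.sum_comm]
    refine Finset.sum_congr rfl fun i' _ => ?_
    rw [Finset.sum_comm]
    refine Finset.sum_congr rfl fun j _ => ?_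
    rw [Hr, Finset.mul_sum]
  -- (e)
  have he : MvPowerSeries.coeff (R := k) γ (∑ i', ∑ j, (g i' * g j) * Hr hg1 f r i' j)
      = MvPowerSeries.coeff (R := k) γ (∑ i', ∑ j, (g i' * g j) * Hfun hg1 f i' j) := by
    rw [map_sum, map_sum]
    refine Finset.sum_congr rfl fun i' _ => ?_
    rw [map_sum, map_sum]
    refine Finset.sum_congr rfl fun j _ => ?_
    refine coeff_mul_congr γ (fun δ _ => rfl) (fun δ hδ => ?_)
    exact (coeff_Hfun_eq hg1 f (show deg δ + 3 ≤ r by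
      have := deg_mono hδ; omega) i' j).symm
  -- assemble
  rw [← he, ← hd]
  rw [map_sub, map_add, map_sub, map_sub, ha, hb, hc]
  ring


end Stmt2Aux

/-- Let `f ∈ R = k⟦x₁,…,xₙ⟧` be nonzero with `mult f ≥ 3`, let `a ≥ 0`, let
`g₁,…,gₙ ∈ m^a·J_f`, and set `g = Σ gᵢ·∂f/∂xᵢ`.  Then the `k`-algebra endomorphism `φ` of `R`
determined by `φ(xᵢ) = xᵢ + gᵢ` exists, is an automorphism, and satisfies
`φ(f) − (f+g) ∈ m^{2a+1}·J_f²`. -/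
theorem stmt2 {k : Type*} [Field k] {n : ℕ} (f : MvPowerSeries (Fin n) k)
    (hf0 : f ≠ 0) (hf : f ∈ mIdeal k n ^ 3) (a : ℕ) (g : Fin n → MvPowerSeries (Fin n) k)
    (hg : ∀ i, g i ∈ mIdeal k n ^ a * jacobianIdeal f) :
    (∃ φ : MvPowerSeries (Fin n) k →ₐ[k] MvPowerSeries (Fin n) k,
        ∀ i, φ (X i) = X i + g i) ∧
    ∀ φ : MvPowerSeries (Fin n) k →ₐ[k] MvPowerSeries (Fin n) k,
      (∀ i, φ (X i) = X i + g i) →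
        Function.Bijective φ ∧
          φ f - (f + ∑ i, g i * pderiv i f) ∈ mIdeal k n ^ (2 * a + 1) * jacobianIdeal f ^ 2 := by
  have hf3 : f ∈ Stmt2Aux.Mq k n 3 := by rw [← Stmt2Aux.pow_mIdeal_eq]; exact hf
  have hJ : jacobianIdeal f ≤ Stmt2Aux.Mq k n 2 := by
    rw [jacobianIdeal, Ideal.span_le]
    rintro _ ⟨i, rfl⟩
    exact Stmt2Aux.pderiv_mem_Mq i hf3
  have hg2 : ∀ i, g i ∈ Stmt2Aux.Mq k n 2 := fun i => hJ (Ideal.mul_le_right (hg i))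
  have hg1 : ∀ i, g i ∈ Stmt2Aux.Mq k n 1 := fun i => Stmt2Aux.Mq_mono (by omega) (hg2 i)
  constructor
  · exact ⟨Stmt2Aux.PhiAlgHom g hg1, Stmt2Aux.PhiAlgHom_X g hg1⟩
  · intro φ hX
    refine ⟨⟨Stmt2Aux.phi_injective φ hX hg2, Stmt2Aux.phi_surjective φ hX hg2⟩, ?_⟩
    rw [Stmt2Aux.taylor_eq hg1 φ hX f]
    refine Submodule.sum_mem _ fun i _ => Submodule.sum_mem _ fun j _ => ?_
    have h1 : (g i * g j) * Stmt2Aux.Hfun hg1 f i j ∈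
        ((mIdeal k n ^ a * jacobianIdeal f) * (mIdeal k n ^ a * jacobianIdeal f)) * mIdeal k n :=
      Ideal.mul_mem_mul (Ideal.mul_mem_mul (hg i) (hg j))
        (by rw [Stmt2Aux.mIdeal_eq_Mq_one]; exact Stmt2Aux.Hfun_mem hg1 hf3 i j)
    have heq : ((mIdeal k n ^ a * jacobianIdeal f) * (mIdeal k n ^ a * jacobianIdeal f))
        * mIdeal k n = mIdeal k n ^ (2 * a + 1) * jacobianIdeal f ^ 2 := by ring
    rwa [heq] at h1
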